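/- Let Z ~ Binomial(n, p) (departures from a full system of m = z_max = n beds), and admitted arrivals Q̂ = min(Q, Z) with Q ~ Poisson(λ) independent of Z. Then E[Q̂] = E[Z] + Σ_{z=0}^{n} (λ − z)(Σ_{k=0}^{z−1} λ^k e^{-λ}/k!) P(Z=z) − Σ_{z=0}^{n} z (λ^z e^{-λ}/z!) P(Z=z). -/

import Mathlib

private noncomputable def pois (lam : ℝ) (q : ℕ) : ℝ :=
  lam ^ q * Real.exp (-lam) / (Nat.factorial q : ℝ)

private lemma pois_nonneg {lam : ℝ} (h : 0 ≤ lam) (q : ℕ) : 0 ≤ pois lam q := by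
  unfold pois; positivity

private lemma pois_summable (lam : ℝ) : Summable (pois lam) := by
  have h := (Real.summable_pow_div_factorial lam).mul_right (Real.exp (-lam))
  refine h.congr fun q => ?_
  simp [pois]; ring

private lemma pois_tsum (lam : ℝ) : ∑' q, pois lam q = 1 := by
  have h1 : Real.exp lam = ∑' q : ℕ, lam ^ q / (Nat.factorial q : ℝ) := by
    rw [Real.exp_eq_exp_ℝ, NormedSpace.exp_eq_tsum_div]
  have h2 : ∑' q, pois lam q = (∑' q : ℕ, lam ^ q / (Nat.factorial q : ℝ)) * Real.exp (-lam) := by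
    rw [← tsum_mul_right]
    refine tsum_congr fun q => ?_
    simp [pois]; ring
  rw [h2, ← h1, ← Real.exp_add]
  simp

private lemma min_summable {lam : ℝ} (hlam : 0 ≤ lam) (z : ℕ) :
    Summable (fun q : ℕ => min (q : ℝ) (z : ℝ) * pois lam q) := by
  refine Summable.of_nonneg_of_le (fun q => ?_) (fun q => ?_)
      ((pois_summable lam).mul_left (z : ℝ))
  · have : (0:ℝ) ≤ min (q:ℝ) (z:ℝ) := le_min (by positivity) (by positivity)
    exact mul_nonneg this (pois_nonneg hlam q)
  · exact mul_le_mul_of_nonneg_right (min_le_right _ _) (pois_nonneg hlam q)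

private lemma tail_tsum (lam : ℝ) (z : ℕ) :
    ∑' q : ℕ, (if z + 1 ≤ q then (1:ℝ) else 0) * pois lam q
      = 1 - ∑ k ∈ Finset.range (z + 1), pois lam k := by
  have hhead : Summable (fun q : ℕ => (if q < z + 1 then pois lam q else 0)) := by
    apply summable_of_finite_support
    apply Set.Finite.subset (Set.finite_Iio (z+1))
    intro q hq
    by_contra h
    simp only [Set.mem_Iio, not_lt] at h
    simp [Nat.not_lt.mpr h] at hq
    exact absurd hq.1 (by omega)
  have htail : Summable (fun q : ℕ => (if z + 1 ≤ q then (1:ℝ) else 0) * pois lam q) := by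
    refine ((pois_summable lam).sub hhead).congr fun q => ?_
    by_cases h : z + 1 ≤ q
    · have h' : ¬ q < z + 1 := by omega
      simp [h, h']
    · have h' : q < z + 1 := by omega
      simp [h, h']
  have hsplit : ∀ q : ℕ, pois lam q
      = (if z + 1 ≤ q then (1:ℝ) else 0) * pois lam q + (if q < z + 1 then pois lam q else 0) := by
    intro q
    by_cases h : z + 1 ≤ q
    · have h' : ¬ q < z + 1 := by omega
      simp [h, h']
    · have h' : q < z + 1 := by omega
      simp [h, h']
  have hheadsum : ∑' q, (if q < z + 1 then pois lam q else 0)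
      = ∑ k ∈ Finset.range (z + 1), pois lam k := by
    rw [tsum_eq_sum (s := Finset.range (z+1)) (fun b hb => by
      simp only [Finset.mem_range] at hb; simp [hb])]
    refine Finset.sum_congr rfl fun k hk => ?_
    simp only [Finset.mem_range] at hk; simp [hk]
  have htot := pois_tsum lam
  rw [tsum_congr hsplit, Summable.tsum_add htail hhead, hheadsum] at htot
  linarith

private lemma key {lam : ℝ} (hlam : 0 ≤ lam) (z : ℕ) :
    ∑' q : ℕ, min (q : ℝ) (z : ℝ) * pois lam q
      = (z : ℝ) + (lam - z) * (∑ k ∈ Finset.range z, pois lam k) - z * pois lam z := by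
  induction z with
  | zero => simp [pois]
  | succ z ih =>
    have hstep : ∀ q : ℕ, min (q : ℝ) ((z+1 : ℕ) : ℝ) * pois lam q
        = min (q : ℝ) (z : ℝ) * pois lam q + (if z + 1 ≤ q then (1:ℝ) else 0) * pois lam q := by
      intro q
      by_cases h : z + 1 ≤ q
      · have h1 : min (q:ℝ) ((z+1:ℕ):ℝ) = ((z+1:ℕ):ℝ) := min_eq_right (by exact_mod_cast h)
        have h2 : min (q:ℝ) (z:ℝ) = (z:ℝ) := min_eq_right (by exact_mod_cast Nat.le_of_succ_le h)
        rw [h1, h2]; simp [h]; push_cast; ring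
      · have h1 : min (q:ℝ) ((z+1:ℕ):ℝ) = (q:ℝ) := min_eq_left (by exact_mod_cast Nat.le_of_lt_succ (by omega))
        have h2 : min (q:ℝ) (z:ℝ) = (q:ℝ) := min_eq_left (by exact_mod_cast Nat.le_of_lt_succ (by omega))
        rw [h1, h2]; simp [h]
    have htail : Summable (fun q : ℕ => (if z + 1 ≤ q then (1:ℝ) else 0) * pois lam q) := by
      refine ((min_summable hlam (z+1)).sub (min_summable hlam z)).congr fun q => ?_
      have := hstep q; push_cast at this ⊢; linarith
    have hlhs : ∑' q : ℕ, min (q : ℝ) ((z+1:ℕ) : ℝ) * pois lam q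
        = (∑' q : ℕ, min (q : ℝ) (z : ℝ) * pois lam q)
          + ∑' q : ℕ, (if z + 1 ≤ q then (1:ℝ) else 0) * pois lam q := by
      rw [tsum_congr hstep, Summable.tsum_add (min_summable hlam z) htail]
    rw [hlhs, ih, tail_tsum lam z]
    have hfac : pois lam (z+1) * ((z:ℝ)+1) = lam * pois lam z := by
      simp only [pois, Nat.factorial_succ, pow_succ]
      push_cast
      have hz : ((Nat.factorial z : ℝ)) ≠ 0 := by positivity
      field_simp
    rw [Finset.sum_range_succ]
    push_cast
    nlinarith [hfac]

/-- For `Z ~ Binomial(n, p)` (departures from a full system of `n` beds) and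
`Q ~ Poisson(λ)` independent of `Z`, with `Q̂ = min(Q, Z)` the admitted arrivals:
`E[Q̂] = E[Z] + Σ_{z=0}^{n} (λ - z)(Σ_{k<z} λ^k e^{-λ}/k!) P(Z=z)
  - Σ_{z=0}^{n} z (λ^z e^{-λ}/z!) P(Z=z)`. -/
theorem stmt14 (lam : ℝ) (hlam : 0 < lam) (n : ℕ) (p : ℝ) (hp : p ∈ Set.Icc (0 : ℝ) 1) :
    (∑' q : ℕ, ∑ z ∈ Finset.range (n + 1),
        (min q z : ℝ) * (lam ^ q * Real.exp (-lam) / (Nat.factorial q : ℝ)) *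
          ((Nat.choose n z : ℝ) * p ^ z * (1 - p) ^ (n - z)))
      = (∑ z ∈ Finset.range (n + 1),
            (z : ℝ) * ((Nat.choose n z : ℝ) * p ^ z * (1 - p) ^ (n - z)))
        + (∑ z ∈ Finset.range (n + 1),
            (lam - (z : ℝ)) *
              (∑ k ∈ Finset.range z, lam ^ k * Real.exp (-lam) / (Nat.factorial k : ℝ)) *
              ((Nat.choose n z : ℝ) * p ^ z * (1 - p) ^ (n - z)))
        - (∑ z ∈ Finset.range (n + 1),
            (z : ℝ) * (lam ^ z * Real.exp (-lam) / (Nat.factorial z : ℝ)) *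
              ((Nat.choose n z : ℝ) * p ^ z * (1 - p) ^ (n - z))) := by
  have hl : (0:ℝ) ≤ lam := hlam.le
  set B : ℕ → ℝ := fun z => (Nat.choose n z : ℝ) * p ^ z * (1 - p) ^ (n - z) with hB
  have hsummand : ∀ (z q : ℕ),
      min (q:ℝ) (z:ℝ) * (lam ^ q * Real.exp (-lam) / (Nat.factorial q : ℝ)) * B z
        = min (q:ℝ) (z:ℝ) * pois lam q * B z := by
    intro z q; rfl
  have hswap : (∑' q : ℕ, ∑ z ∈ Finset.range (n + 1),
        min (q:ℝ) (z:ℝ) * (lam ^ q * Real.exp (-lam) / (Nat.factorial q : ℝ)) * B z)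
      = ∑ z ∈ Finset.range (n + 1), ∑' q : ℕ, min (q:ℝ) (z:ℝ) * pois lam q * B z := by
    have : (∑' q : ℕ, ∑ z ∈ Finset.range (n + 1),
        min (q:ℝ) (z:ℝ) * (lam ^ q * Real.exp (-lam) / (Nat.factorial q : ℝ)) * B z)
        = ∑' q : ℕ, ∑ z ∈ Finset.range (n + 1), min (q:ℝ) (z:ℝ) * pois lam q * B z := by
      refine tsum_congr fun q => Finset.sum_congr rfl fun z _ => hsummand z q
    rw [this]
    exact Summable.tsum_finsetSum (fun z _ => (min_summable hl z).mul_right (B z))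
  rw [hswap]
  have hz : ∀ z ∈ Finset.range (n+1),
      (∑' q : ℕ, min (q:ℝ) (z:ℝ) * pois lam q * B z)
      = ((z : ℝ) + (lam - z) * (∑ k ∈ Finset.range z, pois lam k) - (z:ℝ) * pois lam z) * B z := by
    intro z _
    rw [tsum_mul_right, key hl]
  rw [Finset.sum_congr rfl hz]
  rw [← Finset.sum_add_distrib, ← Finset.sum_sub_distrib]
  refine Finset.sum_congr rfl fun z _ => ?_
  simp only [pois, hB]
  ring
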